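/- Effective compactness for algebraic predicates: for all positive integers d, D, k there exists N such that for every set P of real polynomials in the d·k coordinates of k points of ℝ^d, each polynomial of total degree at most D, the following are equivalent: (i) there exists a sequence (a₁,…,a_N) of N points of ℝ^d such that p(a_{i₁},…,a_{i_k}) = 0 for every p ∈ P and all indices 1 ≤ i₁ < ⋯ < i_k ≤ N; (ii) there exists an infinite sequence a : ℕ → ℝ^d such that p(a_{i₁},…,a_{i_k}) = 0 for every p ∈ P and all indices i₁ < i₂ < ⋯ < i_k. -/

import Mathlib

open MvPolynomial

private lemma totalDegree_bind1_le {σ : Type*} {R : Type*} [CommSemiring R]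
    (f : σ → MvPolynomial σ R) (hf : ∀ v, (f v).totalDegree ≤ 1)
    (p : MvPolynomial σ R) : (bind₁ f p).totalDegree ≤ p.totalDegree := by
  conv_lhs => rw [p.as_sum]
  rw [map_sum]
  refine (totalDegree_finset_sum _ _).trans (Finset.sup_le fun s hs => ?_)
  rw [bind₁_monomial]
  refine (totalDegree_mul _ _).trans ?_
  rw [totalDegree_C, zero_add]
  refine (totalDegree_finset_prod _ _).trans ?_
  refine le_trans ?_ (le_totalDegree hs)
  have : ∀ i ∈ s.support, (f i ^ s i).totalDegree ≤ s i := fun i _ =>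
    (totalDegree_pow _ _).trans (by
      have := hf i; calc s i * (f i).totalDegree ≤ s i * 1 := Nat.mul_le_mul_left _ this
        _ = s i := Nat.mul_one _)
  calc ∑ i ∈ s.support, (f i ^ s i).totalDegree ≤ ∑ i ∈ s.support, s i :=
        Finset.sum_le_sum this
    _ = s.sum fun _ n => n := rfl

private lemma eval_bind1 {σ : Type*} (w : σ → ℝ) (f : σ → MvPolynomial σ ℝ)
    (p : MvPolynomial σ ℝ) :
    eval w (bind₁ f p) = eval (fun v => eval w (f v)) p := by
  exact eval₂Hom_bind₁ (RingHom.id ℝ) w f p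

private lemma stmt4_forward (d D k N : ℕ) (hk : 0 < k)
    (hN : (k+1) * Module.finrank ℝ (restrictTotalDegree (Fin k × Fin d) ℝ D) + 2 ≤ N)
    (P : Set (MvPolynomial (Fin k × Fin d) ℝ))
    (hP : ∀ p ∈ P, p.totalDegree ≤ D)
    (a : Fin N → Fin d → ℝ)
    (ha : ∀ p ∈ P, ∀ i : Fin k → Fin N, StrictMono i →
      MvPolynomial.eval (fun v => a (i v.1) v.2) p = 0) :
    ∃ a : ℕ → Fin d → ℝ, ∀ p ∈ P, ∀ i : Fin k → ℕ, StrictMono i →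
      MvPolynomial.eval (fun v => a (i v.1) v.2) p = 0 := by
  classical
  set M := Module.finrank ℝ (restrictTotalDegree (Fin k × Fin d) ℝ D) with hM
  set B := (k+1) * M with hB
  -- the partially substituted generators
  set G : ℕ → ℕ → Set (MvPolynomial (Fin k × Fin d) ℝ) := fun j s =>
    { q | ∃ p ∈ P, ∃ t : Fin k → Fin N,
        (∀ l l' : Fin k, l < l' → (l' : ℕ) < s → t l < t l') ∧
        (∀ l : Fin k, (l : ℕ) < s → (t l : ℕ) ≤ j) ∧
        q = bind₁
          (fun v : Fin k × Fin d =>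
            if (v.1 : ℕ) < s then C (a (t v.1) v.2) else X v) p } with hG
  set L : ℕ → ℕ → Submodule ℝ (MvPolynomial (Fin k × Fin d) ℝ) := fun j s =>
    Submodule.span ℝ (G j s) with hL
  have hGmono : ∀ j s, G j s ⊆ G (j+1) s := by
    rintro j s q ⟨p, hp, t, h1, h2, rfl⟩
    exact ⟨p, hp, t, h1, fun l hl => (h2 l hl).trans (Nat.le_succ j), rfl⟩
  have hLmono : ∀ j s, L j s ≤ L (j+1) s := fun j s => Submodule.span_mono (hGmono j s)
  have hLle : ∀ j s, L j s ≤ restrictTotalDegree (Fin k × Fin d) ℝ D := by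
    intro j s
    rw [hL, Submodule.span_le]
    rintro q ⟨p, hp, t, h1, h2, rfl⟩
    rw [SetLike.mem_coe, mem_restrictTotalDegree]
    refine (totalDegree_bind1_le _ ?_ p).trans (hP p hp)
    intro v
    by_cases h : (v.1 : ℕ) < s <;> simp [h, totalDegree_X, totalDegree_C]
  haveI : ∀ j s, FiniteDimensional ℝ (L j s) := fun j s =>
    Submodule.finiteDimensional_of_le (hLle j s)
  have hfr : ∀ j s, Module.finrank ℝ (L j s) ≤ M := fun j s =>
    Submodule.finrank_mono (hLle j s)
  -- pigeonhole: find a stable index j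
  obtain ⟨j, hjB, hstab⟩ : ∃ j, j ≤ B ∧ ∀ s, s ≤ k → L (j+1) s = L j s := by
    by_contra hcon
    push_neg at hcon
    set F : ℕ → ℕ := fun j => ∑ s ∈ Finset.range (k+1), Module.finrank ℝ (L j s) with hF
    have hFB : ∀ j, F j ≤ B := by
      intro j
      calc F j ≤ ∑ _s ∈ Finset.range (k+1), M := Finset.sum_le_sum fun s _ => hfr j s
        _ = (k+1) * M := by rw [Finset.sum_const, Finset.card_range, smul_eq_mul]
    have hstep : ∀ j, j ≤ B → F j < F (j+1) := by
      intro j hj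
      obtain ⟨s, hsk, hne⟩ := hcon j hj
      refine Finset.sum_lt_sum (fun s _ => Submodule.finrank_mono (hLmono j s)) ⟨s, ?_, ?_⟩
      · exact Finset.mem_range.2 (by omega)
      · exact Submodule.finrank_lt_finrank_of_lt (lt_of_le_of_ne (hLmono j s) (Ne.symm hne))
    have key : ∀ j, j ≤ B + 1 → j ≤ F j := by
      intro j
      induction j with
      | zero => omega
      | succ n ih => intro h; have := hstep n (by omega); have := ih (by omega); omega
    have := key (B+1) le_rfl
    have := hFB (B+1)
    omega
  have hj1N : j + 1 < N := by omega
  set c : Fin d → ℝ := a ⟨j+1, hj1N⟩ with hc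
  set w : Fin k × Fin d → ℝ := fun v => c v.2 with hw
  -- the vanishing claim, by induction on the number of free blocks
  have claim : ∀ r, r ≤ k → ∀ q ∈ L j (k - r), eval w q = 0 := by
    intro r
    induction r with
    | zero =>
      intro _ q hq
      have : L j (k - 0) ≤ LinearMap.ker ((aeval w : _ →ₐ[ℝ] ℝ).toLinearMap) := by
        rw [hL, Submodule.span_le]
        rintro q ⟨p, hp, t, h1, h2, rfl⟩
        rw [SetLike.mem_coe, LinearMap.mem_ker, AlgHom.toLinearMap_apply]
        have hmono : StrictMono t := fun l l' hll => h1 l l' hll (by omega)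
        have : eval w (bind₁ (fun v : Fin k × Fin d =>
            if (v.1 : ℕ) < (k - 0) then C (a (t v.1) v.2) else X v) p)
            = eval (fun v => a (t v.1) v.2) p := by
          rw [eval_bind1]
          have hfe : (fun v : Fin k × Fin d => eval w
              (if (v.1 : ℕ) < (k - 0) then C (a (t v.1) v.2) else X v))
              = fun v => a (t v.1) v.2 := by
            funext v
            have : (v.1 : ℕ) < k - 0 := by have := v.1.2; omega
            simp [this]
          rw [hfe]
        rw [show (aeval w : MvPolynomial (Fin k × Fin d) ℝ →ₐ[ℝ] ℝ)
            (bind₁ _ p) = eval w (bind₁ (fun v : Fin k × Fin d =>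
            if (v.1 : ℕ) < (k - 0) then C (a (t v.1) v.2) else X v) p) from rfl, this]
        exact ha p hp t hmono
      have := this hq
      rwa [LinearMap.mem_ker, AlgHom.toLinearMap_apply] at this
    | succ r ih =>
      intro hrk q hq
      set s := k - (r+1) with hs
      have hs1 : s + 1 = k - r := by omega
      have : L j s ≤ LinearMap.ker ((aeval w : _ →ₐ[ℝ] ℝ).toLinearMap) := by
        rw [hL, Submodule.span_le]
        rintro q ⟨p, hp, t, h1, h2, rfl⟩
        rw [SetLike.mem_coe, LinearMap.mem_ker, AlgHom.toLinearMap_apply]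
        set t' : Fin k → Fin N := fun l =>
          if (l : ℕ) < s then t l else ⟨j+1, hj1N⟩ with ht'
        set q' : MvPolynomial (Fin k × Fin d) ℝ := bind₁
          (fun v : Fin k × Fin d =>
            if (v.1 : ℕ) < s + 1 then C (a (t' v.1) v.2) else X v) p with hq'
        have hq'mem : q' ∈ G (j+1) (s+1) := by
          refine ⟨p, hp, t', ?_, ?_, rfl⟩
          · intro l l' hll hl'
            by_cases h' : (l' : ℕ) < s
            · have hl : (l : ℕ) < s := lt_trans (by exact_mod_cast hll) h'
              simp only [ht', if_pos h', if_pos hl]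
              exact h1 l l' hll h'
            · have hl : (l : ℕ) < s := by
                have : (l : ℕ) < (l' : ℕ) := hll
                omega
              simp only [ht', if_pos hl, if_neg h']
              have := h2 l hl
              rw [Fin.lt_def]
              simp only [Fin.val_mk]
              omega
          · intro l hl
            by_cases h' : (l : ℕ) < s
            · simp only [ht', if_pos h']; exact (h2 l h').trans (Nat.le_succ j)
            · simp only [ht', if_neg h']
              omega
        have heval : eval w (bind₁ (fun v : Fin k × Fin d =>
            if (v.1 : ℕ) < s then C (a (t v.1) v.2) else X v) p) = eval w q' := by
          rw [hq', eval_bind1, eval_bind1]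
          have hfe : (fun v : Fin k × Fin d => eval w
              (if (v.1 : ℕ) < s then C (a (t v.1) v.2) else X v))
              = fun v : Fin k × Fin d => eval w
              (if (v.1 : ℕ) < s + 1 then C (a (t' v.1) v.2) else X v) := by
            funext v
            by_cases h1v : (v.1 : ℕ) < s
            · have : (v.1 : ℕ) < s + 1 := by omega
              simp [h1v, this, ht']
            · by_cases h2v : (v.1 : ℕ) < s + 1
              · simp [h1v, h2v, ht', hw, hc]
              · simp [h1v, h2v]
          rw [hfe]
        rw [show (aeval w : MvPolynomial (Fin k × Fin d) ℝ →ₐ[ℝ] ℝ)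
            (bind₁ _ p) = eval w (bind₁ (fun v : Fin k × Fin d =>
            if (v.1 : ℕ) < s then C (a (t v.1) v.2) else X v) p) from rfl, heval]
        have : q' ∈ L j (k - r) := by
          rw [← hstab (k - r) (by omega), ← hs1]
          exact Submodule.subset_span hq'mem
        exact ih (by omega) q' this
      have := this hq
      rwa [LinearMap.mem_ker, AlgHom.toLinearMap_apply] at this
  -- the infinite sequence
  refine ⟨fun n => a ⟨min n (j+1), by omega⟩, ?_⟩
  intro p hp i hi
  set s : ℕ := (Finset.univ.filter fun l : Fin k => i l ≤ j).card with hscard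
  have hsk : s ≤ k := by
    calc s ≤ Finset.univ.card := Finset.card_filter_le _ _
      _ = k := Finset.card_fin k
  have hkey : ∀ l : Fin k, ((l : ℕ) < s ↔ i l ≤ j) := by
    intro l
    constructor
    · intro hl
      by_contra hcon
      push_neg at hcon
      have hsub : (Finset.univ.filter fun l' : Fin k => i l' ≤ j) ⊆ Finset.Iio l := by
        intro l' hl'
        rw [Finset.mem_filter] at hl'
        rw [Finset.mem_Iio]
        by_contra hge
        push_neg at hge
        exact absurd (le_trans (hi.monotone hge) hl'.2) (by omega)
      have := Finset.card_le_card hsub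
      rw [Fin.card_Iio] at this
      omega
    · intro hl
      have hsub : Finset.Iic l ⊆ (Finset.univ.filter fun l' : Fin k => i l' ≤ j) := by
        intro l' hl'
        rw [Finset.mem_Iic] at hl'
        exact Finset.mem_filter.2 ⟨Finset.mem_univ _, le_trans (hi.monotone hl') hl⟩
      have := Finset.card_le_card hsub
      rw [Fin.card_Iic] at this
      omega
  set t : Fin k → Fin N := fun l => ⟨min (i l) (j+1), by omega⟩ with ht
  set q : MvPolynomial (Fin k × Fin d) ℝ := bind₁
    (fun v : Fin k × Fin d =>
      if (v.1 : ℕ) < s then C (a (t v.1) v.2) else X v) p with hq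
  have hqmem : q ∈ G j s := by
    refine ⟨p, hp, t, ?_, ?_, rfl⟩
    · intro l l' hll hl'
      have h2 : i l' ≤ j := (hkey l').1 hl'
      have h1l : i l < i l' := hi hll
      refine Fin.mk_lt_mk.mpr ?_
      omega
    · intro l hl
      have := (hkey l).1 hl
      simp only [ht]
      omega
  have hfinal : eval (fun v : Fin k × Fin d =>
      (fun n => a ⟨min n (j+1), by omega⟩) (i v.1) v.2) p = eval w q := by
    rw [hq, eval_bind1]
    have hfe : (fun v : Fin k × Fin d =>
        (fun n => a ⟨min n (j+1), by omega⟩) (i v.1) v.2)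
        = fun v : Fin k × Fin d => eval w
        (if (v.1 : ℕ) < s then C (a (t v.1) v.2) else X v) := by
      funext v
      by_cases hv : (v.1 : ℕ) < s
      · simp [hv, ht]
      · have hgt : j < i v.1 := by
          by_contra hcon; push_neg at hcon; exact hv ((hkey v.1).2 hcon)
        have hmin : min (i v.1) (j+1) = j + 1 := by omega
        simp only [hv, if_false, eval_X, hw, hc, hmin]
    rw [hfe]
  rw [hfinal]
  have : q ∈ L j (k - (k - s)) := by
    rw [show k - (k - s) = s by omega]
    exact Submodule.subset_span hqmem
  exact claim (k - s) (by omega) q this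

theorem stmt4 (d D k : ℕ) (hd : 0 < d) (hD : 0 < D) (hk : 0 < k) :
    ∃ N : ℕ, ∀ P : Set (MvPolynomial (Fin k × Fin d) ℝ),
      (∀ p ∈ P, p.totalDegree ≤ D) →
      ((∃ a : Fin N → Fin d → ℝ, ∀ p ∈ P, ∀ i : Fin k → Fin N, StrictMono i →
          MvPolynomial.eval (fun v => a (i v.1) v.2) p = 0) ↔
       (∃ a : ℕ → Fin d → ℝ, ∀ p ∈ P, ∀ i : Fin k → ℕ, StrictMono i →
          MvPolynomial.eval (fun v => a (i v.1) v.2) p = 0)) := by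
  refine ⟨(k+1) * Module.finrank ℝ (restrictTotalDegree (Fin k × Fin d) ℝ D) + 2, ?_⟩
  intro P hP
  constructor
  · rintro ⟨a, ha⟩
    exact stmt4_forward d D k _ hk le_rfl P hP a ha
  · rintro ⟨a, ha⟩
    refine ⟨fun n => a n, ?_⟩
    intro p hp i hi
    exact ha p hp (fun l => (i l : ℕ)) (fun l l' h => hi h)
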